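/- For any GT tableau r of rank ℓ+1 with r_{1,ℓ+1} = 0, the quantity ∑_{a=1}^{ℓ} ∑_{b=1}^{ℓ+1−a} H_{ab}(r) + ∑_{b=1}^{ℓ} ∑_{a=1}^{b} V_{a1}(r) is bounded above by ℓ · r_{11}. -/

import Mathlib

/-- A Gelfand–Tsetlin tableau of rank `ℓ+1`. -/
def IsGT (ℓ : ℕ) (r : ℕ → ℕ → ℤ) : Prop :=
  (∀ i j, 1 ≤ i → 1 ≤ j → i + j ≤ ℓ + 2 → 0 ≤ r i j) ∧
  (∀ i j, 1 ≤ i → 1 ≤ j → i + 1 + j ≤ ℓ + 2 → r (i + 1) j ≤ r i j) ∧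
  (∀ i j, 1 ≤ i → 1 ≤ j → i + j + 1 ≤ ℓ + 2 → r i (j + 1) ≤ r (i + 1) j)

lemma gt_tele_le (g h : ℕ → ℤ) : ∀ n : ℕ, (∀ b, 1 ≤ b → b ≤ n → g (b + 1) ≤ h b) →
    ∑ b ∈ Finset.Icc 1 n, (g b - h b) ≤ g 1 - g (n + 1) := by
  intro n
  induction n with
  | zero => simp
  | succ m ih =>
    intro H
    rw [Finset.sum_Icc_succ_top (by omega)]
    have h1 := ih (fun b hb1 hb2 => H b hb1 (by omega))
    have h2 := H (m + 1) (by omega) le_rfl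
    linarith

lemma gt_tele_eq (f : ℕ → ℤ) : ∀ n : ℕ,
    ∑ a ∈ Finset.Icc 1 n, (f a - f (a + 1)) = f 1 - f (n + 1) := by
  intro n
  induction n with
  | zero => simp
  | succ m ih =>
    rw [Finset.sum_Icc_succ_top (by omega), ih]
    ring

/-- For a GT tableau with `r_{1,ℓ+1} = 0`,
`∑_{a=1}^{ℓ} ∑_{b=1}^{ℓ+1−a} H_{ab}(r) + ∑_{b=1}^{ℓ} ∑_{a=1}^{b} V_{a1}(r) ≤ ℓ·r_{11}`. -/
theorem gt_total_coordinate_bound (ℓ : ℕ) (r : ℕ → ℕ → ℤ) (hr : IsGT ℓ r)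
    (htop : r 1 (ℓ + 1) = 0) :
    (∑ a ∈ Finset.Icc 1 ℓ, ∑ b ∈ Finset.Icc 1 (ℓ + 1 - a),
        (r (a + 1) b - r a (b + 1))) +
      (∑ b ∈ Finset.Icc 1 ℓ, ∑ a ∈ Finset.Icc 1 b, (r a 1 - r (a + 1) 1)) ≤
      (ℓ : ℤ) * r 1 1 := by
  obtain ⟨hpos, hcol, hrow⟩ := hr
  have hS1 : ∀ a ∈ Finset.Icc 1 ℓ,
      ∑ b ∈ Finset.Icc 1 (ℓ + 1 - a), (r (a + 1) b - r a (b + 1)) ≤ r (a + 1) 1 := by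
    intro a ha
    rw [Finset.mem_Icc] at ha
    obtain ⟨ha1, ha2⟩ := ha
    set m := ℓ - a with hm
    have hma : ℓ + 1 - a = m + 1 := by omega
    rw [hma, Finset.sum_Icc_succ_top (by omega)]
    have h1 : ∑ b ∈ Finset.Icc 1 m, (r (a + 1) b - r a (b + 1)) ≤
        r (a + 1) 1 - r (a + 1) (m + 1) := by
      apply gt_tele_le
      intro b hb1 hb2
      exact hcol a (b + 1) ha1 (by omega) (by omega)
    have h2 : 0 ≤ r a (m + 1 + 1) := hpos a (m + 1 + 1) ha1 (by omega) (by omega)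
    linarith
  have hS2 : ∀ b ∈ Finset.Icc 1 ℓ,
      ∑ a ∈ Finset.Icc 1 b, (r a 1 - r (a + 1) 1) = r 1 1 - r (b + 1) 1 := by
    intro b _
    exact gt_tele_eq (fun a => r a 1) b
  calc (∑ a ∈ Finset.Icc 1 ℓ, ∑ b ∈ Finset.Icc 1 (ℓ + 1 - a),
        (r (a + 1) b - r a (b + 1))) +
      (∑ b ∈ Finset.Icc 1 ℓ, ∑ a ∈ Finset.Icc 1 b, (r a 1 - r (a + 1) 1))
      ≤ (∑ a ∈ Finset.Icc 1 ℓ, r (a + 1) 1) +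
        (∑ b ∈ Finset.Icc 1 ℓ, (r 1 1 - r (b + 1) 1)) := by
        gcongr with a ha b hb
        · exact hS1 a ha
        · exact le_of_eq (hS2 b hb)
    _ = ∑ a ∈ Finset.Icc 1 ℓ, r 1 1 := by
        rw [← Finset.sum_add_distrib]
        apply Finset.sum_congr rfl
        intro a _; ring
    _ = (ℓ : ℤ) * r 1 1 := by
        rw [Finset.sum_const, Nat.card_Icc]
        simp [nsmul_eq_mul]
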